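/- Let φ : S_n → S_n be linear with φ(C_n) = C_n. Then there exists a monomial congruence μ (x ↦ mᵀxm for a nonnegative monomial matrix m) such that ψ = φ∘μ satisfies ψ(e_{tt}) = e_{tt} + b_t for some b_t ∈ T_n, for every index t. -/

import Mathlib

open Matrix

/-- A matrix is copositive if its quadratic form is nonnegative on the nonnegative orthant. -/
def Copositive {m : Type*} [Fintype m] (a : Matrix m m ℝ) : Prop :=
  ∀ u : m → ℝ, (∀ i, 0 ≤ u i) → 0 ≤ u ⬝ᵥ a *ᵥ u

/-- The submodule of symmetric n×n real matrices. -/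
def Sn (n : ℕ) : Submodule ℝ (Matrix (Fin n) (Fin n) ℝ) where
  carrier := {a | a.IsSymm}
  add_mem' := fun ha hb => ha.add hb
  zero_mem' := Matrix.isSymm_zero
  smul_mem' := fun c a ha => ha.smul c

/-- The copositive cone, as a subset of the symmetric matrices. -/
def Cn (n : ℕ) : Set (Sn n) := {a | Copositive a.1}

/-- The set A^t : symmetric matrices with (t,t) entry zero, all other entries positive. -/
def At (n : ℕ) (t : Fin n) : Set (Sn n) :=
  {a | a.1 t t = 0 ∧ ∀ i j, (i, j) ≠ (t, t) → 0 < a.1 i j}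

/-- T_n : symmetric nonnegative matrices with zero diagonal. -/
def Tn (n : ℕ) : Set (Sn n) := {a | (∀ i j, 0 ≤ a.1 i j) ∧ ∀ i, a.1 i i = 0}

/-- A monomial matrix: exactly one nonzero entry in each row and column. -/
def IsMonomial {n : ℕ} (m : Matrix (Fin n) (Fin n) ℝ) : Prop :=
  (∀ i, ∃! j, m i j ≠ 0) ∧ (∀ j, ∃! i, m i j ≠ 0)

lemma copos_of_nonneg {n : ℕ} (A : Matrix (Fin n) (Fin n) ℝ)
    (h : ∀ i j, 0 ≤ A i j) : Copositive A := by
  intro u hu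
  unfold dotProduct Matrix.mulVec dotProduct
  apply Finset.sum_nonneg
  intro i _
  apply mul_nonneg (hu i)
  exact Finset.sum_nonneg fun j _ => mul_nonneg (h i j) (hu j)

lemma copos_diag {n : ℕ} (A : Matrix (Fin n) (Fin n) ℝ) (hA : Copositive A) (i : Fin n) :
    0 ≤ A i i := by
  have := hA (Pi.single i 1) (fun j => by
    rcases eq_or_ne j i with rfl | h
    · simp
    · simp [Pi.single_eq_of_ne h])
  simpa [single_dotProduct, mulVec_single] using this

lemma copos_row {n : ℕ} (A : Matrix (Fin n) (Fin n) ℝ) (hA : Copositive A) (hs : A.IsSymm)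
    (i j : Fin n) (hii : A i i = 0) : 0 ≤ A i j := by
  rcases eq_or_ne i j with rfl | hij
  · exact hii.ge
  by_contra hneg
  push_neg at hneg
  set x : ℝ := (A j j + 1) / (2 * (-A i j)) with hx
  have hAij : 0 < -A i j := by linarith
  have hjj : 0 ≤ A j j := copos_diag A hA j
  have hxpos : 0 < x := div_pos (by linarith) (by linarith)
  set v1 : Fin n → ℝ := Pi.single j 1 with hv1
  set v2 : Fin n → ℝ := Pi.single i 1 with hv2
  set u : Fin n → ℝ := v1 + x • v2 with hudef
  have hu : ∀ k, 0 ≤ u k := by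
    intro k
    show 0 ≤ v1 k + x * v2 k
    simp only [hv1, hv2, Pi.single_apply]
    split_ifs <;> nlinarith [hxpos]
  have h0 := hA u hu
  have hform : u ⬝ᵥ A *ᵥ u = A j j + 2 * x * A i j := by
    show (v1 + x • v2) ⬝ᵥ A *ᵥ (v1 + x • v2) = _
    rw [mulVec_add, mulVec_smul]
    simp only [v1, v2, mulVec_single, dotProduct_add, add_dotProduct, dotProduct_smul,
      smul_dotProduct, single_dotProduct, Pi.smul_apply, smul_eq_mul, mul_one]
    simp [hs.apply i j, hii]
    ring
  rw [hform] at h0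
  have : 2 * x * A i j = -(A j j + 1) := by
    rw [hx]; field_simp [hneg.ne]
  rw [this] at h0; linarith

lemma quad_expand {n : ℕ} (A : Matrix (Fin n) (Fin n) ℝ) (v w : Fin n → ℝ) :
    (v + w) ⬝ᵥ A *ᵥ (v + w) = v ⬝ᵥ A *ᵥ v + v ⬝ᵥ A *ᵥ w + w ⬝ᵥ A *ᵥ v + w ⬝ᵥ A *ᵥ w := by
  rw [mulVec_add, add_dotProduct, dotProduct_add, dotProduct_add]
  ring

lemma dot_symm {n : ℕ} {A : Matrix (Fin n) (Fin n) ℝ} (hs : A.IsSymm) (v w : Fin n → ℝ) :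
    v ⬝ᵥ A *ᵥ w = w ⬝ᵥ A *ᵥ v := by
  simp only [dotProduct, Matrix.mulVec, dotProduct, Finset.mul_sum]
  rw [Finset.sum_comm]
  refine Finset.sum_congr rfl fun l _ => Finset.sum_congr rfl fun k _ => ?_
  rw [hs.apply l k]
  ring

lemma copos_mulVec_zero {n : ℕ} (A : Matrix (Fin n) (Fin n) ℝ) (hA : Copositive A)
    (hs : A.IsSymm) (u : Fin n → ℝ) (hu : ∀ i, 0 ≤ u i) (h0 : u ⬝ᵥ A *ᵥ u = 0)
    (i : Fin n) (hi : 0 < u i) : (A *ᵥ u) i = 0 := by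
  set c : ℝ := (A *ᵥ u) i with hc
  set d : ℝ := A i i with hd
  have hdnn : 0 ≤ d := copos_diag A hA i
  have key : ∀ x : ℝ, -u i ≤ x → 0 ≤ 2 * x * c + x ^ 2 * d := by
    intro x hx
    set v2 : Fin n → ℝ := Pi.single i 1 with hv2
    have hwn : ∀ k, 0 ≤ (u + x • v2) k := by
      intro k
      show 0 ≤ u k + x * v2 k
      rcases eq_or_ne k i with rfl | hk
      · simp only [hv2, Pi.single_eq_same, mul_one]; linarith
      · simp only [hv2, Pi.single_eq_of_ne hk, mul_zero, add_zero]; exact hu k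
    have h1 := hA _ hwn
    rw [quad_expand] at h1
    have e2 : A *ᵥ (x • v2) = x • fun k => A k i * 1 := by
      rw [mulVec_smul, hv2, mulVec_single]
      funext k; simp [Matrix.col]
    have t2 : u ⬝ᵥ A *ᵥ (x • v2) = x * c := by
      rw [dot_symm hs, smul_dotProduct, hv2, single_dotProduct, one_mul, ← hc, smul_eq_mul]
    have t3 : (x • v2) ⬝ᵥ A *ᵥ u = x * c := by
      rw [smul_dotProduct, hv2, single_dotProduct, one_mul, ← hc, smul_eq_mul]
    have t4 : (x • v2) ⬝ᵥ A *ᵥ (x • v2) = x ^ 2 * d := by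
      rw [e2, smul_dotProduct, dotProduct_smul, hv2, single_dotProduct]
      simp [hd]
      ring
    rw [h0, t2, t3, t4] at h1
    linarith
  by_contra hc0
  have habs : 0 < |c| := abs_pos.mpr hc0
  set t : ℝ := min (u i) (|c| / (d + 1)) with ht
  have htpos : 0 < t := lt_min hi (by positivity)
  have ht1 : t ≤ u i := min_le_left _ _
  have ht2 : t * (d + 1) ≤ |c| := by
    rw [← le_div_iff₀ (by linarith)]
    exact min_le_right _ _
  rcases lt_or_gt_of_ne hc0 with hneg | hpos
  · have := key t (by linarith)
    have habs' : |c| = -c := abs_of_neg hneg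
    nlinarith
  · have := key (-t) (by linarith)
    have habs' : |c| = c := abs_of_pos hpos
    nlinarith

lemma std_symm {n : ℕ} (t : Fin n) : (Matrix.single t t (1:ℝ)).IsSymm := by
  ext i j
  simp [Matrix.transpose_apply, Matrix.single, and_comm]

noncomputable def En {n : ℕ} (t : Fin n) : Sn n := ⟨Matrix.single t t 1, std_symm t⟩

lemma std_mulVec {n : ℕ} (a b : Fin n) (u : Fin n → ℝ) (k : Fin n) :
    (Matrix.single a b (1:ℝ) *ᵥ u) k = if k = a then u b else 0 := by
  simp only [Matrix.mulVec, dotProduct, Matrix.single, Matrix.of_apply]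
  rcases eq_or_ne k a with rfl | hk
  · rw [Finset.sum_eq_single b]
    · simp
    · intro l _ hl; simp [hl.symm]
    · simp
  · rw [Finset.sum_eq_zero, if_neg hk]
    intro l _
    simp only [ite_mul, one_mul, zero_mul, ite_eq_right_iff, and_imp]
    intro h
    exact absurd h.symm hk

lemma En_mem_Cn {n : ℕ} (t : Fin n) : En t ∈ Cn n := by
  apply copos_of_nonneg
  intro i j
  simp only [En, Matrix.single, Matrix.of_apply]
  split_ifs <;> norm_num

lemma abs_le_entry_sum {n : ℕ} (A : Matrix (Fin n) (Fin n) ℝ) (i j : Fin n) :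
    |A i j| ≤ ∑ i', ∑ j', |A i' j'| :=
  calc |A i j| ≤ ∑ j', |A i j'| :=
        Finset.single_le_sum (f := fun j' => |A i j'|)
          (fun j' _ => abs_nonneg _) (Finset.mem_univ j)
    _ ≤ ∑ i', ∑ j', |A i' j'| :=
        Finset.single_le_sum (f := fun i' => ∑ j', |A i' j'|)
          (fun i' _ => Finset.sum_nonneg fun j' _ => abs_nonneg _) (Finset.mem_univ i)

lemma phi_surj {n : ℕ} (φ : Sn n →ₗ[ℝ] Sn n) (hφ : φ '' Cn n = Cn n) :
    Function.Surjective φ := by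
  rw [← LinearMap.range_eq_top, eq_top_iff]
  rintro x -
  have hCn_sub : Cn n ⊆ ↑(LinearMap.range φ) := by
    rw [← hφ]
    rintro _ ⟨y, _, rfl⟩
    exact ⟨y, rfl⟩
  have hBsymm : (Matrix.of fun _ _ => (1:ℝ) : Matrix (Fin n) (Fin n) ℝ).IsSymm := by
    ext i j; rfl
  set B : Sn n := ⟨Matrix.of fun _ _ => (1:ℝ), hBsymm⟩ with hB
  have hBC : B ∈ Cn n := copos_of_nonneg _ (fun i j => by norm_num [hB])
  set c : ℝ := ∑ i, ∑ j, |x.1 i j| with hc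
  have hcb : ∀ i j, |x.1 i j| ≤ c := by
    intro i j
    rw [hc]
    calc |x.1 i j| ≤ ∑ j', |x.1 i j'| :=
          Finset.single_le_sum (f := fun j' => |x.1 i j'|)
            (fun j' _ => abs_nonneg _) (Finset.mem_univ j)
      _ ≤ ∑ i', ∑ j', |x.1 i' j'| :=
          Finset.single_le_sum (f := fun i' => ∑ j', |x.1 i' j'|)
            (fun i' _ => Finset.sum_nonneg fun j' _ => abs_nonneg _) (Finset.mem_univ i)
  have hxc : x + c • B ∈ Cn n := by
    apply copos_of_nonneg
    intro i j
    have h1 : (x + c • B).1 i j = x.1 i j + c := by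
      simp [hB, Matrix.add_apply, Matrix.smul_apply]
    rw [h1]
    have := abs_le.mp (hcb i j)
    linarith [this.1]
  have h1 : x + c • B ∈ LinearMap.range φ := hCn_sub hxc
  have h2 : B ∈ LinearMap.range φ := hCn_sub hBC
  have : x = (x + c • B) - c • B := by abel
  rw [this]
  exact sub_mem h1 (Submodule.smul_mem _ c h2)

lemma phi_inj {n : ℕ} (φ : Sn n →ₗ[ℝ] Sn n) (hφ : φ '' Cn n = Cn n) :
    Function.Injective φ :=
  LinearMap.injective_iff_surjective.mpr (phi_surj φ hφ)

lemma mem_Cn_iff {n : ℕ} (φ : Sn n →ₗ[ℝ] Sn n) (hφ : φ '' Cn n = Cn n) (y : Sn n) :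
    φ y ∈ Cn n ↔ y ∈ Cn n := by
  constructor
  · intro h
    rw [← hφ] at h
    obtain ⟨z, hz, he⟩ := h
    rwa [← phi_inj φ hφ he]
  · intro h
    rw [← hφ]
    exact ⟨y, h, rfl⟩

lemma smul_form {n : ℕ} (A : Matrix (Fin n) (Fin n) ℝ) (s : ℝ) (w : Fin n → ℝ) :
    (s • w) ⬝ᵥ A *ᵥ (s • w) = s ^ 2 * (w ⬝ᵥ A *ᵥ w) := by
  rw [mulVec_smul, smul_dotProduct, dotProduct_smul]
  simp [smul_eq_mul]
  ring

set_option maxHeartbeats 2000000 in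
lemma key_exists_s {n : ℕ} (φ : Sn n →ₗ[ℝ] Sn n) (hφ : φ '' Cn n = Cn n) (t : Fin n) :
    ∃ s : Fin n, ∀ Y : Sn n, Y.1 t t = 0 → (φ Y).1 s s = 0 := by
  classical
  have hsurj := phi_surj φ hφ
  -- the matrix A0 : all ones except (t,t) entry zero
  have hA0symm : (Matrix.of fun i j => if i = t ∧ j = t then (0:ℝ) else 1).IsSymm := by
    ext i j
    simp only [Matrix.transpose_apply, Matrix.of_apply]
    by_cases h1 : i = t <;> by_cases h2 : j = t <;> simp [h1, h2]
  set A0 : Sn n := ⟨Matrix.of fun i j => if i = t ∧ j = t then (0:ℝ) else 1, hA0symm⟩ with hA0def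
  have hA0C : A0 ∈ Cn n := copos_of_nonneg _ (fun i j => by
    simp only [hA0def, Matrix.of_apply]
    split_ifs <;> norm_num)
  have hA0phi : φ A0 ∈ Cn n := (mem_Cn_iff φ hφ A0).mpr hA0C
  -- Step 1 : find u in the simplex with zero quadratic form for φ A0
  obtain ⟨u, huS, hu0⟩ : ∃ u ∈ stdSimplex ℝ (Fin n), u ⬝ᵥ (φ A0).1 *ᵥ u = 0 := by
    by_contra hcon
    push_neg at hcon
    have hpos : ∀ u ∈ stdSimplex ℝ (Fin n), 0 < u ⬝ᵥ (φ A0).1 *ᵥ u := by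
      intro u hu
      exact lt_of_le_of_ne (hA0phi u hu.1) (Ne.symm (hcon u hu))
    -- minimum of the form on the compact simplex
    have hcont : Continuous fun u : Fin n → ℝ => u ⬝ᵥ (φ A0).1 *ᵥ u := by
      show Continuous fun u : Fin n → ℝ => ∑ i, u i * ∑ j, (φ A0).1 i j * u j
      apply continuous_finset_sum
      intro i _
      exact (continuous_apply i).mul
        (continuous_finset_sum _ fun j _ => continuous_const.mul (continuous_apply j))
    have hne : (stdSimplex ℝ (Fin n)).Nonempty := by
      refine ⟨Pi.single t 1, fun i => ?_, by simp⟩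
      rcases eq_or_ne i t with rfl | h
      · simp
      · simp [Pi.single_eq_of_ne h]
    obtain ⟨u0, hu0S, hmin'⟩ :=
      (isCompact_stdSimplex ℝ (Fin n)).exists_isMinOn hne hcont.continuousOn
    have hmin : ∀ w ∈ stdSimplex ℝ (Fin n),
        u0 ⬝ᵥ (φ A0).1 *ᵥ u0 ≤ w ⬝ᵥ (φ A0).1 *ᵥ w := fun w hw => hmin' hw
    set δ : ℝ := u0 ⬝ᵥ (φ A0).1 *ᵥ u0 with hδ
    have hδpos : 0 < δ := hpos u0 hu0S
    set M : Matrix (Fin n) (Fin n) ℝ := (φ (En t)).1 with hM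
    set K : ℝ := ∑ i, ∑ j, |M i j| with hK
    have hKnn : 0 ≤ K := Finset.sum_nonneg fun i _ => Finset.sum_nonneg fun j _ => abs_nonneg _
    set ε : ℝ := δ / (2 * (K + 1)) with hε
    have hεpos : 0 < ε := by positivity
    have hεK : ε * K < δ := by
      rw [hε]
      rw [div_mul_eq_mul_div, div_lt_iff₀ (by positivity)]
      nlinarith
    have hbound : ∀ w ∈ stdSimplex ℝ (Fin n), w ⬝ᵥ M *ᵥ w ≤ K := by
      intro w hw
      have hw1 : ∀ i, w i ≤ 1 := by
        intro i
        calc w i ≤ ∑ j, w j :=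
          Finset.single_le_sum (f := fun j => w j) (fun j _ => hw.1 j) (Finset.mem_univ i)
        _ = 1 := hw.2
      have hrow : ∀ i, w i * ∑ j, M i j * w j ≤ ∑ j, |M i j| := by
        intro i
        have h2 : ∑ j, M i j * w j ≤ ∑ j, |M i j| := by
          refine Finset.sum_le_sum fun j _ => ?_
          nlinarith [le_abs_self (M i j), abs_nonneg (M i j), hw.1 j, hw1 j]
        have hSnn : 0 ≤ ∑ j, |M i j| :=
          Finset.sum_nonneg fun j _ => abs_nonneg _
        nlinarith [hw.1 i, hw1 i]
      calc w ⬝ᵥ M *ᵥ w = ∑ i, w i * ∑ j, M i j * w j := rfl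
        _ ≤ ∑ i, ∑ j, |M i j| := Finset.sum_le_sum fun i _ => hrow i
        _ = K := hK.symm
    -- the perturbed matrix is copositive
    have hpert : φ A0 - ε • φ (En t) ∈ Cn n := by
      intro v hv
      have hcoe : (φ A0 - ε • φ (En t)).1 = (φ A0).1 - ε • M := by
        simp [hM]
      rw [hcoe]
      by_cases hs0 : ∑ i, v i = 0
      · have hv0 : v = 0 := funext fun i =>
          (Finset.sum_eq_zero_iff_of_nonneg (fun j _ => hv j)).mp hs0 i (Finset.mem_univ i)
        rw [hv0]
        simp
      · set s : ℝ := ∑ i, v i with hs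
        have hspos : 0 < s := lt_of_le_of_ne (Finset.sum_nonneg fun i _ => hv i) (Ne.symm hs0)
        have hw : ∃ w ∈ stdSimplex ℝ (Fin n), v = s • w := by
          refine ⟨fun i => s⁻¹ * v i, ⟨fun i => mul_nonneg (by positivity) (hv i), ?_⟩, ?_⟩
          · rw [← Finset.mul_sum, ← hs, inv_mul_cancel₀ hs0]
          · funext i
            show v i = s * (s⁻¹ * v i)
            rw [← mul_assoc, mul_inv_cancel₀ hs0, one_mul]
        obtain ⟨w, hwS, hveq⟩ := hw
        rw [hveq, smul_form]
        have hform : w ⬝ᵥ ((φ A0).1 - ε • M) *ᵥ w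
            = w ⬝ᵥ (φ A0).1 *ᵥ w - ε * (w ⬝ᵥ M *ᵥ w) := by
          rw [sub_mulVec, dotProduct_sub]
          congr 1
          rw [smul_mulVec, dotProduct_smul, smul_eq_mul]
        rw [hform]
        have h1 : δ ≤ w ⬝ᵥ (φ A0).1 *ᵥ w := hmin w hwS
        have h2 : w ⬝ᵥ M *ᵥ w ≤ K := hbound w hwS
        have h3 : ε * (w ⬝ᵥ M *ᵥ w) ≤ ε * K := mul_le_mul_of_nonneg_left h2 hεpos.le
        have hin : 0 ≤ w ⬝ᵥ (φ A0).1 *ᵥ w - ε * (w ⬝ᵥ M *ᵥ w) := by linarith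
        exact mul_nonneg (sq_nonneg s) hin
    -- pull back : A0 - ε • En t would be copositive, contradiction
    have hpull : A0 - ε • En t ∈ Cn n := by
      have : φ (A0 - ε • En t) ∈ Cn n := by
        rw [map_sub, LinearMap.map_smul]
        exact hpert
      exact (mem_Cn_iff φ hφ _).mp this
    have hdiag := copos_diag _ hpull t
    have : (A0 - ε • En t).1 t t = -ε := by
      simp [hA0def, En, Matrix.sub_apply, Matrix.smul_apply, Matrix.single]
    rw [this] at hdiag
    linarith
  -- Step 2 : the key vanishing property
  have hun : ∀ i, 0 ≤ u i := huS.1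
  have hkey : ∀ Y : Sn n, Y.1 t t = 0 → ∀ i, 0 < u i → ((φ Y).1 *ᵥ u) i = 0 := by
    intro Y hY
    set c : ℝ := ∑ i, ∑ j, |Y.1 i j| with hc
    have hcnn : 0 ≤ c :=
      Finset.sum_nonneg fun i _ => Finset.sum_nonneg fun j _ => abs_nonneg _
    set ε : ℝ := (1 + c)⁻¹ with hε
    have hεpos : 0 < ε := inv_pos.mpr (by linarith)
    have hYb : ∀ i j, ε * |Y.1 i j| ≤ 1 := by
      intro i j
      have h1 : |Y.1 i j| ≤ 1 + c := le_trans (abs_le_entry_sum Y.1 i j) (by linarith)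
      calc ε * |Y.1 i j| ≤ ε * (1 + c) := mul_le_mul_of_nonneg_left h1 hεpos.le
        _ = 1 := by rw [hε]; field_simp
    have hentry : ∀ i j, (A0 : Matrix (Fin n) (Fin n) ℝ) i j
        = if i = t ∧ j = t then 0 else 1 := fun i j => rfl
    have hplus : A0 + ε • Y ∈ Cn n := by
      apply copos_of_nonneg
      intro i j
      have h1 : (A0 + ε • Y).1 i j = (if i = t ∧ j = t then (0:ℝ) else 1) + ε * Y.1 i j := rfl
      rw [h1]
      by_cases hij : i = t ∧ j = t
      · obtain ⟨rfl, rfl⟩ := hij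
        simp [hY]
      · rw [if_neg hij]
        have h2 : ε * -|Y.1 i j| ≤ ε * Y.1 i j :=
          mul_le_mul_of_nonneg_left (neg_abs_le (Y.1 i j)) hεpos.le
        rw [mul_neg] at h2
        linarith [hYb i j]
    have hminus : A0 - ε • Y ∈ Cn n := by
      apply copos_of_nonneg
      intro i j
      have h1 : (A0 - ε • Y).1 i j = (if i = t ∧ j = t then (0:ℝ) else 1) - ε * Y.1 i j := rfl
      rw [h1]
      by_cases hij : i = t ∧ j = t
      · obtain ⟨rfl, rfl⟩ := hij
        simp [hY]
      · rw [if_neg hij]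
        have h2 : ε * Y.1 i j ≤ ε * |Y.1 i j| :=
          mul_le_mul_of_nonneg_left (le_abs_self (Y.1 i j)) hεpos.le
        linarith [hYb i j]
    have hp : φ (A0 + ε • Y) ∈ Cn n := (mem_Cn_iff φ hφ _).mpr hplus
    have hm : φ (A0 - ε • Y) ∈ Cn n := (mem_Cn_iff φ hφ _).mpr hminus
    have hcoeP : (φ (A0 + ε • Y)).1 = (φ A0).1 + ε • (φ Y).1 := by
      rw [map_add, LinearMap.map_smul]; rfl
    have hcoeM : (φ (A0 - ε • Y)).1 = (φ A0).1 - ε • (φ Y).1 := by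
      rw [map_sub, LinearMap.map_smul]; rfl
    have hfp : u ⬝ᵥ (φ (A0 + ε • Y)).1 *ᵥ u = ε * (u ⬝ᵥ (φ Y).1 *ᵥ u) := by
      rw [hcoeP, add_mulVec, dotProduct_add, hu0, smul_mulVec, dotProduct_smul,
        smul_eq_mul, zero_add]
    have hfm : u ⬝ᵥ (φ (A0 - ε • Y)).1 *ᵥ u = -(ε * (u ⬝ᵥ (φ Y).1 *ᵥ u)) := by
      rw [hcoeM, sub_mulVec, dotProduct_sub, hu0, smul_mulVec, dotProduct_smul,
        smul_eq_mul, zero_sub]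
    have hg0 : u ⬝ᵥ (φ Y).1 *ᵥ u = 0 := by
      have h1 := hp u hun
      have h2 := hm u hun
      rw [hfp] at h1
      rw [hfm] at h2
      nlinarith
    intro i hui
    have hzp : ((φ (A0 + ε • Y)).1 *ᵥ u) i = 0 :=
      copos_mulVec_zero _ hp (φ (A0 + ε • Y)).2 u hun (by rw [hfp, hg0, mul_zero]) i hui
    have hz0 : ((φ A0).1 *ᵥ u) i = 0 :=
      copos_mulVec_zero _ hA0phi (φ A0).2 u hun hu0 i hui
    have hsplit : ((φ (A0 + ε • Y)).1 *ᵥ u) i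
        = ((φ A0).1 *ᵥ u) i + ε * (((φ Y).1 *ᵥ u) i) := by
      rw [hcoeP, add_mulVec, smul_mulVec]
      simp [smul_eq_mul]
    rw [hzp, hz0, zero_add] at hsplit
    rcases mul_eq_zero.mp hsplit.symm with h | h
    · exact absurd h hεpos.ne'
    · exact h
  -- Step 3 : the support of u is a single index s
  obtain ⟨s, hus⟩ : ∃ s, 0 < u s := by
    by_contra h
    push_neg at h
    have hz : ∀ i, u i = 0 := fun i => le_antisymm (h i) (hun i)
    have : (1:ℝ) = 0 := by
      rw [← huS.2, Finset.sum_eq_zero fun i _ => hz i]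
    norm_num at this
  have hdec : ∀ (X : Sn n) (i : Fin n), 0 < u i →
      ((φ X).1 *ᵥ u) i = X.1 t t * (((φ (En t)).1 *ᵥ u) i) := by
    intro X i hui
    have h1 : (X - X.1 t t • En t).1 t t = 0 := by
      show X.1 t t - X.1 t t * (Matrix.single t t (1:ℝ)) t t = 0
      simp [Matrix.single]
    have h2 := hkey _ h1 i hui
    have h3 : (φ X).1 = (φ (X - X.1 t t • En t)).1 + X.1 t t • (φ (En t)).1 := by
      rw [map_sub, LinearMap.map_smul]
      show _ = ((φ X).1 - X.1 t t • (φ (En t)).1) + X.1 t t • (φ (En t)).1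
      abel
    rw [h3, add_mulVec, smul_mulVec]
    show ((φ (X - X.1 t t • En t)).1 *ᵥ u) i + X.1 t t * (((φ (En t)).1 *ᵥ u) i) = _
    rw [h2, zero_add]
  have huniq : ∀ j, j ≠ s → u j = 0 := by
    intro j hj
    by_contra hj0
    have huj : 0 < u j := lt_of_le_of_ne (hun j) (Ne.symm hj0)
    obtain ⟨P, hP⟩ := hsurj (En s)
    obtain ⟨Q, hQ⟩ := hsurj (En j)
    have e1 := hdec P s hus
    rw [hP] at e1
    have hEs : ((En s).1 *ᵥ u) s = u s := by
      rw [En, std_mulVec, if_pos rfl]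
    rw [hEs] at e1
    have hcs : ((φ (En t)).1 *ᵥ u) s ≠ 0 := by
      intro h
      rw [h, mul_zero] at e1
      exact hus.ne' e1
    have e2 := hdec Q s hus
    rw [hQ] at e2
    have hEj : ((En j).1 *ᵥ u) s = 0 := by
      rw [En, std_mulVec, if_neg (fun h => hj h.symm)]
    rw [hEj] at e2
    have hQtt : Q.1 t t = 0 := by
      rcases mul_eq_zero.mp e2.symm with h | h
      · exact h
      · exact absurd h hcs
    have e3 := hdec Q j huj
    rw [hQ] at e3
    have hEjj : ((En j).1 *ᵥ u) j = u j := by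
      rw [En, std_mulVec, if_pos rfl]
    rw [hEjj, hQtt, zero_mul] at e3
    exact hj0 e3
  refine ⟨s, fun Y hY => ?_⟩
  have h2 := hkey Y hY s hus
  have hex : ((φ Y).1 *ᵥ u) s = (φ Y).1 s s * u s := by
    show ∑ k, (φ Y).1 s k * u k = _
    rw [Finset.sum_eq_single s]
    · intro k _ hk
      rw [huniq k hk, mul_zero]
    · intro h
      exact absurd (Finset.mem_univ s) h
  rw [hex] at h2
  rcases mul_eq_zero.mp h2 with h | h
  · exact h
  · exact absurd h hus.ne'


set_option maxHeartbeats 1000000 in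
/-- There is a monomial congruence μ such that ψ = φ ∘ μ sends each e_{tt} to e_{tt} + b_t
with b_t ∈ T_n. -/
theorem stmt_16 (n : ℕ) (φ : Sn n →ₗ[ℝ] Sn n) (hφ : φ '' Cn n = Cn n) :
    ∃ (m : Matrix (Fin n) (Fin n) ℝ) (μ : Sn n →ₗ[ℝ] Sn n),
      IsMonomial m ∧ (∀ i j, 0 ≤ m i j) ∧ (∀ x : Sn n, (μ x).1 = mᵀ * x.1 * m) ∧
      ∀ (t : Fin n) (e : Sn n), e.1 = Matrix.single t t 1 →
        ∃ b ∈ Tn n, (φ (μ e)).1 = e.1 + b.1 := by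
  classical
  have hsurj := phi_surj φ hφ
  choose τ hτ using key_exists_s φ hφ
  have hEtt : ∀ t : Fin n, (En t).1 t t = 1 := fun t => by
    simp [En]
  have hdec : ∀ (X : Sn n) (t : Fin n),
      (φ X).1 (τ t) (τ t) = X.1 t t * (φ (En t)).1 (τ t) (τ t) := by
    intro X t
    have h1 : (X - X.1 t t • En t).1 t t = 0 := by
      show X.1 t t - X.1 t t * (Matrix.single t t (1:ℝ)) t t = 0
      simp
    have h2 := hτ t _ h1
    have h3 : (φ X).1 = (φ (X - X.1 t t • En t)).1 + X.1 t t • (φ (En t)).1 := by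
      rw [map_sub, LinearMap.map_smul]
      show _ = ((φ X).1 - X.1 t t • (φ (En t)).1) + X.1 t t • (φ (En t)).1
      abel
    rw [h3]
    show (φ (X - X.1 t t • En t)).1 (τ t) (τ t)
        + X.1 t t * (φ (En t)).1 (τ t) (τ t) = _
    rw [h2, zero_add]
  have hinj : Function.Injective τ := by
    intro t t' h
    by_contra hne
    have hE0 : (En t).1 t' t' = 0 :=
      Matrix.single_apply_of_ne t t 1 t' t' (fun hc => hne hc.1)
    have h4 : (φ (En t)).1 (τ t') (τ t') = 0 := hτ t' _ hE0
    rw [← h] at h4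
    obtain ⟨P, hP⟩ := hsurj (En (τ t))
    have h5 := hdec P t
    rw [hP, h4, mul_zero, hEtt (τ t)] at h5
    exact one_ne_zero h5
  have hbij : Function.Bijective τ := Finite.injective_iff_bijective.mp hinj
  let τe : Fin n ≃ Fin n := Equiv.ofBijective τ hbij
  set lam : Fin n → ℝ := fun t => (φ (En t)).1 (τ t) (τ t) with hlam
  have hEC : ∀ t, φ (En t) ∈ Cn n := by
    intro t
    rw [← hφ]
    exact ⟨En t, En_mem_Cn t, rfl⟩
  have hlam_pos : ∀ t, 0 < lam t := by
    intro t
    rcases (copos_diag _ (hEC t) (τ t)).lt_or_eq with h | h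
    · exact h
    · exfalso
      obtain ⟨P, hP⟩ := hsurj (En (τ t))
      have h5 := hdec P t
      rw [hP, hEtt (τ t), ← h, mul_zero] at h5
      exact one_ne_zero h5
  have hdiag0 : ∀ t s, s ≠ τ t → (φ (En t)).1 s s = 0 := by
    intro t s hs
    obtain ⟨t', ht'⟩ := hbij.2 s
    have htt' : t' ≠ t := fun hc => hs (by rw [← ht', hc])
    have hE0 : (En t).1 t' t' = 0 :=
      Matrix.single_apply_of_ne t t 1 t' t' (fun hc => htt' hc.1.symm)
    rw [← ht']
    exact hτ t' _ hE0
  have hoff : ∀ t i j, 0 ≤ (φ (En t)).1 i j := by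
    intro t i j
    by_cases hi : i = τ t
    · by_cases hj : j = τ t
      · rw [hi, hj]
        exact (hlam_pos t).le
      · have h1 : 0 ≤ (φ (En t)).1 j i :=
          copos_row _ (hEC t) (φ (En t)).2 j i (hdiag0 t j hj)
        rwa [(φ (En t)).2.apply i j] at h1
    · exact copos_row _ (hEC t) (φ (En t)).2 i j (hdiag0 t i hi)
  -- construction of the monomial matrix and congruence map
  let σ : Fin n ≃ Fin n := τe.symm
  let m : Matrix (Fin n) (Fin n) ℝ :=
    Matrix.of fun i j => if j = σ i then (Real.sqrt (lam (σ i)))⁻¹ else 0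
  have hmval : ∀ i, m i (σ i) = (Real.sqrt (lam (σ i)))⁻¹ := fun i => if_pos rfl
  have hm0 : ∀ i j, j ≠ σ i → m i j = 0 := fun i j h => if_neg h
  have hsq : ∀ t', 0 < Real.sqrt (lam t') := fun t' => Real.sqrt_pos.mpr (hlam_pos t')
  have hmnz : ∀ i, m i (σ i) ≠ 0 := fun i => by
    rw [hmval]
    exact inv_ne_zero (hsq (σ i)).ne'
  have hmono : IsMonomial m := by
    constructor
    · intro i
      refine ⟨σ i, hmnz i, fun j hj => ?_⟩
      by_contra hc
      exact hj (hm0 i j hc)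
    · intro j
      have hst : σ (τe j) = j := τe.symm_apply_apply j
      refine ⟨τe j, ?_, fun i hi => ?_⟩
      · have h := hmnz (τe j)
        rwa [hst] at h
      · by_contra hc
        apply hi
        apply hm0
        intro hj
        exact hc ((congrArg τe hj).trans (τe.apply_symm_apply i)).symm
  have hmnn : ∀ i j, 0 ≤ m i j := by
    intro i j
    by_cases h : j = σ i
    · rw [h, hmval]
      positivity
    · rw [hm0 i j h]
  have hμsymm : ∀ x : Sn n, (mᵀ * x.1 * m).IsSymm := by
    intro x
    have hx : x.1ᵀ = x.1 := x.2
    show (mᵀ * x.1 * m)ᵀ = mᵀ * x.1 * m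
    rw [Matrix.transpose_mul, Matrix.transpose_mul, Matrix.transpose_transpose, hx,
      ← Matrix.mul_assoc]
  let μ : Sn n →ₗ[ℝ] Sn n :=
    { toFun := fun x => ⟨mᵀ * x.1 * m, hμsymm x⟩
      map_add' := fun x y => Subtype.ext (by
        show mᵀ * (x.1 + y.1) * m = mᵀ * x.1 * m + mᵀ * y.1 * m
        rw [Matrix.mul_add, Matrix.add_mul])
      map_smul' := fun c x => Subtype.ext (by
        show mᵀ * (c • x.1) * m = c • (mᵀ * x.1 * m)
        rw [Matrix.mul_smul, Matrix.smul_mul]) }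
  refine ⟨m, μ, hmono, hmnn, fun x => rfl, ?_⟩
  intro t e he
  have hτσ : τ (σ t) = t := τe.apply_symm_apply t
  -- compute μ e
  have hμe : (μ e).1 = (lam (σ t))⁻¹ • (En (σ t)).1 := by
    show mᵀ * e.1 * m = (lam (σ t))⁻¹ • (Matrix.single (σ t) (σ t) (1:ℝ))
    rw [he, Matrix.mul_assoc]
    ext i j
    rw [Matrix.mul_apply]
    rw [Finset.sum_eq_single t]
    · rw [Matrix.transpose_apply, Matrix.single_mul_apply_same, one_mul]
      by_cases hi : i = σ t
      · by_cases hj : j = σ t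
        · rw [hi, hj, hmval, Matrix.smul_apply, Matrix.single_apply_same,
            smul_eq_mul, mul_one, ← mul_inv, Real.mul_self_sqrt (hlam_pos (σ t)).le]
        · rw [hm0 t j hj, mul_zero, Matrix.smul_apply,
            Matrix.single_apply_of_ne _ _ _ _ _ (fun hc => hj hc.2.symm), smul_zero]
      · rw [hm0 t i hi, zero_mul, Matrix.smul_apply,
          Matrix.single_apply_of_ne _ _ _ _ _ (fun hc => hi hc.1.symm), smul_zero]
    · intro k _ hk
      rw [Matrix.single_mul_apply_of_ne _ _ _ _ _ hk, mul_zero]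
    · intro h
      exact absurd (Finset.mem_univ t) h
  have hμe' : μ e = (lam (σ t))⁻¹ • En (σ t) := Subtype.ext hμe
  have hφμ : (φ (μ e)).1 = (lam (σ t))⁻¹ • (φ (En (σ t))).1 := by
    rw [hμe', LinearMap.map_smul]
    rfl
  have hbentry : ∀ i j, (φ (μ e) - e).1 i j
      = (lam (σ t))⁻¹ * (φ (En (σ t))).1 i j - Matrix.single t t (1:ℝ) i j := by
    intro i j
    show (φ (μ e)).1 i j - e.1 i j = _
    rw [hφμ, he, Matrix.smul_apply, smul_eq_mul]
  have hlamσ : lam (σ t) = (φ (En (σ t))).1 t t := by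
    show (φ (En (σ t))).1 (τ (σ t)) (τ (σ t)) = _
    rw [hτσ]
  have hdiagb : ∀ i, (φ (μ e) - e).1 i i = 0 := by
    intro i
    rw [hbentry]
    by_cases hi : i = t
    · rw [hi, Matrix.single_apply_same, ← hlamσ,
        inv_mul_cancel₀ (hlam_pos (σ t)).ne', sub_self]
    · rw [Matrix.single_apply_of_ne _ _ _ _ _ (fun hc => hi hc.1.symm),
        hdiag0 (σ t) i (by rw [hτσ]; exact hi), mul_zero, sub_zero]
  refine ⟨φ (μ e) - e, ⟨?_, hdiagb⟩, ?_⟩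
  · intro i j
    by_cases hij : i = j
    · subst hij
      rw [hdiagb]
    · rw [hbentry,
        Matrix.single_apply_of_ne _ _ _ _ _ (fun hc => hij (hc.1.symm.trans hc.2)),
        sub_zero]
      exact mul_nonneg (inv_nonneg.mpr (hlam_pos (σ t)).le) (hoff (σ t) i j)
  · show (φ (μ e)).1 = e.1 + ((φ (μ e)).1 - e.1)
    abel
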